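/- Let α > 0 and let p be a real polynomial with p(0) ≠ 0. If p and Υ_α p have the same number of real zeros (counted with multiplicity), then ϑ(Υ_α p) < ϑ(p), where ϑ(q) denotes the sum of multiplicities of all multiple real zeros of q; in particular, if ϑ(p) > 0 then Υ_α p has strictly smaller total multiplicity of multiple real zeros than p. -/

import Mathlib

open Polynomial Finset

/-- `ϑ(q)`: the total multiplicity of multiple real zeros of `q`, i.e. the sum of the
multiplicities of those real zeros whose multiplicity is larger than 1. -/
noncomputable def thetaMult (q : Polynomial ℝ) : ℕ :=
  Multiset.card (q.roots.filter (fun t => 1 < q.rootMultiplicity t))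

-- divisibility lemma: (X - ξ)^(m-1) divides q
lemma pow_dvd_q (α : ℝ) (p : Polynomial ℝ) (ξ : ℝ) :
    (X - C ξ) ^ (p.rootMultiplicity ξ - 1) ∣ p + C (1/α) * (X * derivative p) := by
  apply dvd_add
  · exact dvd_trans (pow_dvd_pow _ (Nat.sub_le _ 1)) (p.pow_rootMultiplicity_dvd ξ)
  · apply Dvd.dvd.mul_left
    apply Dvd.dvd.mul_left
    by_cases hd : derivative p = 0
    · simp [hd]
    · exact dvd_trans (pow_dvd_pow _ (p.rootMultiplicity_sub_one_le_derivative_rootMultiplicity ξ))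
        ((derivative p).pow_rootMultiplicity_dvd ξ)

lemma rolle_pos (α : ℝ) (hα : 0 < α) (p : Polynomial ℝ) {a b : ℝ} (ha : 0 ≤ a) (hab : a < b)
    (hfa : a = 0 ∨ p.eval a = 0) (hfb : p.eval b = 0) :
    ∃ η ∈ Set.Ioo a b, (p + C (1/α) * (X * derivative p)).eval η = 0 := by
  set f : ℝ → ℝ := fun x => x ^ α * p.eval x with hf
  have hcont : ContinuousOn f (Set.Icc a b) := by
    apply ContinuousOn.mul _ (Polynomial.continuous p).continuousOn
    intro x _
    exact (Real.continuousAt_rpow_const x α (Or.inr hα.le)).continuousWithinAt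
  have hfab : f a = f b := by
    rcases hfa with h | h
    · simp [hf, h, Real.zero_rpow hα.ne', hfb]
    · simp [hf, h, hfb]
  obtain ⟨c, hc, hc0⟩ := exists_deriv_eq_zero hab hcont hfab
  have hcpos : 0 < c := lt_of_le_of_lt ha hc.1
  refine ⟨c, hc, ?_⟩
  have hd : HasDerivAt f (α * c ^ (α - 1) * p.eval c + c ^ α * (derivative p).eval c) c := by
    exact HasDerivAt.mul (Real.hasDerivAt_rpow_const (Or.inl hcpos.ne')) (p.hasDerivAt c)
  have h0 : α * c ^ (α - 1) * p.eval c + c ^ α * (derivative p).eval c = 0 := by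
    rw [← hd.deriv]; exact hc0
  have hsplit : c ^ α = c ^ (α - 1) * c := by
    rw [show α = (α - 1) + 1 by ring, Real.rpow_add hcpos, Real.rpow_one]
    ring_nf
  have hne : c ^ (α - 1) ≠ 0 := (Real.rpow_pos_of_pos hcpos _).ne'
  have key : α * p.eval c + c * (derivative p).eval c = 0 := by
    have : c ^ (α - 1) * (α * p.eval c + c * (derivative p).eval c) = 0 := by
      rw [hsplit] at h0; ring_nf; ring_nf at h0; linarith
    rcases mul_eq_zero.mp this with h | h
    · exact absurd h hne
    · exact h
  simp only [eval_add, eval_mul, eval_C, eval_X]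
  field_simp
  linarith

lemma rolle_neg (α : ℝ) (hα : 0 < α) (p : Polynomial ℝ) {a b : ℝ} (hb : b ≤ 0) (hab : a < b)
    (hfb : b = 0 ∨ p.eval b = 0) (hfa : p.eval a = 0) :
    ∃ η ∈ Set.Ioo a b, (p + C (1/α) * (X * derivative p)).eval η = 0 := by
  set f : ℝ → ℝ := fun x => (-x) ^ α * p.eval x with hf
  have hcont : ContinuousOn f (Set.Icc a b) := by
    apply ContinuousOn.mul _ (Polynomial.continuous p).continuousOn
    intro x _
    exact ((Real.continuousAt_rpow_const (-x) α (Or.inr hα.le)).comp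
      (continuousAt_neg)).continuousWithinAt
  have hfab : f a = f b := by
    rcases hfb with h | h
    · simp [hf, h, Real.zero_rpow hα.ne', hfa]
    · simp [hf, h, hfa]
  obtain ⟨c, hc, hc0⟩ := exists_deriv_eq_zero hab hcont hfab
  have hcneg : c < 0 := lt_of_lt_of_le hc.2 hb
  have hncpos : 0 < -c := by linarith
  refine ⟨c, hc, ?_⟩
  have hd1 : HasDerivAt (fun x : ℝ => (-x) ^ α) (α * (-c) ^ (α - 1) * (-1)) c := by
    have := (Real.hasDerivAt_rpow_const (x := -c) (p := α) (Or.inl hncpos.ne')).comp c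
      (hasDerivAt_neg c)
    simpa [Function.comp_def] using this
  have hd : HasDerivAt f (α * (-c) ^ (α - 1) * (-1) * p.eval c + (-c) ^ α * (derivative p).eval c)
      c := HasDerivAt.mul hd1 (p.hasDerivAt c)
  have h0 : α * (-c) ^ (α - 1) * (-1) * p.eval c + (-c) ^ α * (derivative p).eval c = 0 := by
    rw [← hd.deriv]; exact hc0
  have hsplit : (-c) ^ α = (-c) ^ (α - 1) * (-c) := by
    rw [show α = (α - 1) + 1 by ring, Real.rpow_add hncpos, Real.rpow_one]
    ring_nf
  have hne : (-c) ^ (α - 1) ≠ 0 := (Real.rpow_pos_of_pos hncpos _).ne'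
  have key : α * p.eval c + c * (derivative p).eval c = 0 := by
    have h2 : (-c) ^ (α - 1) * (-(α * p.eval c + c * (derivative p).eval c)) = 0 := by
      rw [hsplit] at h0; ring_nf; ring_nf at h0; linarith
    rcases mul_eq_zero.mp h2 with h | h
    · exact absurd h hne
    · linarith
  simp only [eval_add, eval_mul, eval_C, eval_X]
  field_simp
  linarith

lemma gap_root (α : ℝ) (hα : 0 < α) (p : Polynomial ℝ) (hp : p ≠ 0) (hp0 : p.eval 0 ≠ 0)
    (ξ : ℝ) (hξ : ξ ∈ p.roots.toFinset) :
    ∃ η, (p + C (1/α) * (X * derivative p)).eval η = 0 ∧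
      ((∃ a, 0 ≤ a ∧ η ∈ Set.Ioo a ξ ∧ ∀ s ∈ p.roots.toFinset, s ∉ Set.Ioo a ξ) ∨
       (∃ b, b ≤ 0 ∧ η ∈ Set.Ioo ξ b ∧ ∀ s ∈ p.roots.toFinset, s ∉ Set.Ioo ξ b)) := by
  rw [Multiset.mem_toFinset, mem_roots hp] at hξ
  have hξ0 : ξ ≠ 0 := fun h => hp0 (by subst h; exact hξ)
  rcases hξ0.lt_or_gt with hneg | hpos
  · -- negative case: find gap above ξ
    set T := p.roots.toFinset.filter (fun s => ξ < s ∧ s < 0) with hT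
    by_cases hne : T.Nonempty
    · set b := T.min' hne with hbdef
      have hbT : b ∈ T := T.min'_mem hne
      rw [hT, Finset.mem_filter, Multiset.mem_toFinset, mem_roots hp] at hbT
      obtain ⟨hbroot, hξb, hb0⟩ := hbT
      obtain ⟨η, hη1, hη2⟩ := rolle_neg α hα p hb0.le hξb (Or.inr hbroot) hξ
      refine ⟨η, hη2, Or.inr ⟨b, hb0.le, hη1, ?_⟩⟩
      intro s hs hsIoo
      have hsT : s ∈ T := by
        rw [hT, Finset.mem_filter]
        exact ⟨hs, hsIoo.1, hsIoo.2.trans hb0⟩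
      exact absurd (T.min'_le s hsT) (not_le.mpr hsIoo.2)
    · obtain ⟨η, hη1, hη2⟩ := rolle_neg α hα p le_rfl hneg (Or.inl rfl) hξ
      refine ⟨η, hη2, Or.inr ⟨0, le_rfl, hη1, ?_⟩⟩
      intro s hs hsIoo
      exact hne ⟨s, by rw [hT, Finset.mem_filter]; exact ⟨hs, hsIoo.1, hsIoo.2⟩⟩
  · -- positive case
    set T := p.roots.toFinset.filter (fun s => 0 < s ∧ s < ξ) with hT
    by_cases hne : T.Nonempty
    · set a := T.max' hne with hadef
      have haT : a ∈ T := T.max'_mem hne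
      rw [hT, Finset.mem_filter, Multiset.mem_toFinset, mem_roots hp] at haT
      obtain ⟨haroot, ha0, haξ⟩ := haT
      obtain ⟨η, hη1, hη2⟩ := rolle_pos α hα p ha0.le haξ (Or.inr haroot) hξ
      refine ⟨η, hη2, Or.inl ⟨a, ha0.le, hη1, ?_⟩⟩
      intro s hs hsIoo
      have hsT : s ∈ T := by
        rw [hT, Finset.mem_filter]
        exact ⟨hs, ha0.trans hsIoo.1, hsIoo.2⟩
      exact absurd (T.le_max' s hsT) (not_le.mpr hsIoo.1)
    · obtain ⟨η, hη1, hη2⟩ := rolle_pos α hα p le_rfl hpos (Or.inl rfl) hξ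
      refine ⟨η, hη2, Or.inl ⟨0, le_rfl, hη1, ?_⟩⟩
      intro s hs hsIoo
      exact hne ⟨s, by rw [hT, Finset.mem_filter]; exact ⟨hs, hsIoo.1, hsIoo.2⟩⟩

lemma theta_sum (q : Polynomial ℝ) (F : Finset ℝ) (hF : q.roots.toFinset ⊆ F) :
    thetaMult q = ∑ t ∈ F, (if 1 < q.rootMultiplicity t then q.rootMultiplicity t else 0) := by
  classical
  unfold thetaMult
  rw [← Multiset.toFinset_sum_count_eq]
  rw [Finset.sum_subset (Finset.Subset.trans
    (Multiset.toFinset_subset.mpr (fun t ht => Multiset.mem_of_le (Multiset.filter_le _ _) ht)) hF)]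
  · apply Finset.sum_congr rfl
    intro t _
    rw [Multiset.count_filter, count_roots]
  · intro t _ ht
    exact Multiset.count_eq_zero.mpr (fun h => ht (Multiset.mem_toFinset.mpr h))

/-- For `α > 0` and `p(0) ≠ 0`, if `p` and `Υ_α p = p + (x/α) p'` have the same number
of real zeros (with multiplicity) and `p` has some multiple real zero, then
`ϑ(Υ_α p) < ϑ(p)`. -/
theorem stmt_14 (α : ℝ) (hα : 0 < α) (p : Polynomial ℝ) (hp0 : p.eval 0 ≠ 0)
    (hθ : 0 < thetaMult p)
    (hsame : (p + Polynomial.C (1 / α) * (Polynomial.X * Polynomial.derivative p)).roots.card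
      = p.roots.card) :
    thetaMult (p + Polynomial.C (1 / α) * (Polynomial.X * Polynomial.derivative p))
      < thetaMult p := by
  classical
  set q : Polynomial ℝ := p + Polynomial.C (1 / α) * (Polynomial.X * Polynomial.derivative p)
    with hqdef
  have hp : p ≠ 0 := fun h => hp0 (by simp [h])
  have hq00 : q.eval 0 = p.eval 0 := by simp [hqdef]
  have hq : q ≠ 0 := fun h => hp0 (by rw [← hq00, h]; simp)
  set S : Finset ℝ := p.roots.toFinset with hSdef
  -- choose gap roots
  have hgap : ∀ ξ : ℝ, ∃ η, ξ ∈ S → (q.eval η = 0 ∧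
      ((∃ a, 0 ≤ a ∧ η ∈ Set.Ioo a ξ ∧ ∀ s ∈ S, s ∉ Set.Ioo a ξ) ∨
       (∃ b, b ≤ 0 ∧ η ∈ Set.Ioo ξ b ∧ ∀ s ∈ S, s ∉ Set.Ioo ξ b))) := by
    intro ξ
    by_cases hξ : ξ ∈ S
    · obtain ⟨η, h1, h2⟩ := gap_root α hα p hp hp0 ξ hξ
      exact ⟨η, fun _ => ⟨h1, h2⟩⟩
    · exact ⟨0, fun h => absurd h hξ⟩
  choose η hη using hgap
  -- η values are not in S
  have hηS : ∀ ξ ∈ S, η ξ ∉ S := by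
    intro ξ hξ hmem
    rcases (hη ξ hξ).2 with ⟨a, _, hIoo, hgap'⟩ | ⟨b, _, hIoo, hgap'⟩
    · exact hgap' _ hmem hIoo
    · exact hgap' _ hmem hIoo
  -- injectivity of η on S
  have hηinj : ∀ ξ ∈ S, ∀ ξ' ∈ S, η ξ = η ξ' → ξ = ξ' := by
    intro ξ hξ ξ' hξ' heq
    by_contra hne
    rcases (hη ξ hξ).2 with ⟨a, ha0, hIoo, hgapξ⟩ | ⟨b, hb0, hIoo, hgapξ⟩ <;>
      rcases (hη ξ' hξ').2 with ⟨a', ha0', hIoo', hgapξ'⟩ | ⟨b', hb0', hIoo', hgapξ'⟩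
    · -- both positive type
      rw [heq] at hIoo
      rcases lt_or_gt_of_ne hne with h | h
      · have : ξ ∉ Set.Ioo a' ξ' := hgapξ' ξ hξ
        have hξa' : ξ ≤ a' := by
          by_contra hc
          exact this ⟨lt_of_not_ge hc, h⟩
        exact absurd (hIoo.2.trans_le (hξa'.trans hIoo'.1.le)) (lt_irrefl _)
      · have : ξ' ∉ Set.Ioo a ξ := hgapξ ξ' hξ'
        have hξa : ξ' ≤ a := by
          by_contra hc
          exact this ⟨lt_of_not_ge hc, h⟩
        exact absurd (hIoo'.2.trans_le (hξa.trans hIoo.1.le)) (lt_irrefl _)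
    · -- ξ positive type, ξ' negative type
      rw [heq] at hIoo
      have h1 : 0 < η ξ' := lt_of_le_of_lt ha0 hIoo.1
      have h2 : η ξ' < 0 := lt_of_lt_of_le hIoo'.2 hb0'
      linarith
    · rw [heq] at hIoo
      have h1 : η ξ' < 0 := lt_of_lt_of_le hIoo.2 hb0
      have h2 : 0 < η ξ' := lt_of_le_of_lt ha0' hIoo'.1
      linarith
    · rw [heq] at hIoo
      rcases lt_or_gt_of_ne hne with h | h
      · have : ξ' ∉ Set.Ioo ξ b := hgapξ ξ' hξ'
        have hξb : b ≤ ξ' := by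
          by_contra hc
          exact this ⟨h, lt_of_not_ge hc⟩
        exact absurd (hIoo'.1.trans (lt_of_lt_of_le hIoo.2 hξb)) (lt_irrefl _)
      · have : ξ ∉ Set.Ioo ξ' b' := hgapξ' ξ hξ
        have hξb : b' ≤ ξ := by
          by_contra hc
          exact this ⟨h, lt_of_not_ge hc⟩
        exact absurd (hIoo.1.trans (lt_of_lt_of_le hIoo'.2 hξb)) (lt_irrefl _)
  -- the candidate multiset
  set N : Multiset ℝ := (p.roots - S.val) + S.val.map η with hNdef
  have hSle : S.val ≤ p.roots := p.roots.dedup_le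
  have hSnodup : S.val.Nodup := S.nodup
  have hmapnodup : (S.val.map η).Nodup :=
    Multiset.Nodup.map_on (fun x hx y hy h => hηinj x hx y hy h) hSnodup
  have hcount_sub : ∀ t ∈ S, (p.roots - S.val).count t = p.rootMultiplicity t - 1 := by
    intro t ht
    rw [Multiset.count_sub, count_roots, Multiset.count_eq_one_of_mem hSnodup ht]
  have hmem_map_iff : ∀ t, t ∈ S.val.map η ↔ ∃ ξ ∈ S, η ξ = t := by
    intro t
    simp only [Multiset.mem_map, ← Finset.mem_def]
  have hcount_map_zero : ∀ t ∈ S, (S.val.map η).count t = 0 := by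
    intro t ht
    rw [Multiset.count_eq_zero]
    intro hmem
    obtain ⟨ξ, hξ, hξt⟩ := (hmem_map_iff t).mp hmem
    exact hηS ξ hξ (hξt ▸ ht)
  have hNcount_S : ∀ t ∈ S, N.count t = p.rootMultiplicity t - 1 := by
    intro t ht
    rw [hNdef, Multiset.count_add, hcount_sub t ht, hcount_map_zero t ht, add_zero]
  have hNcount_map : ∀ ξ ∈ S, N.count (η ξ) = 1 := by
    intro ξ hξ
    have htS : η ξ ∉ S := hηS ξ hξ
    have h1 : (p.roots - S.val).count (η ξ) = 0 := by
      rw [Multiset.count_eq_zero]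
      intro hmem
      exact htS (Multiset.mem_toFinset.mpr (Multiset.mem_of_le (tsub_le_self) hmem))
    rw [hNdef, Multiset.count_add, h1,
      Multiset.count_eq_one_of_mem hmapnodup ((hmem_map_iff _).mpr ⟨ξ, hξ, rfl⟩)]
  -- N ≤ q.roots
  have hNle : N ≤ q.roots := by
    rw [Multiset.le_iff_count]
    intro t
    by_cases htS : t ∈ S
    · rw [hNcount_S t htS, count_roots]
      rw [Polynomial.le_rootMultiplicity_iff hq]
      exact pow_dvd_q α p t
    · by_cases htm : ∃ ξ ∈ S, η ξ = t
      · obtain ⟨ξ, hξ, rfl⟩ := htm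
        rw [hNcount_map ξ hξ]
        rw [Multiset.one_le_count_iff_mem]
        exact (mem_roots hq).mpr (hη ξ hξ).1
      · have h1 : (p.roots - S.val).count t = 0 := by
          rw [Multiset.count_eq_zero]
          intro hmem
          exact htS (Multiset.mem_toFinset.mpr (Multiset.mem_of_le (tsub_le_self) hmem))
        have h2 : (S.val.map η).count t = 0 := by
          rw [Multiset.count_eq_zero]
          intro hmem
          exact htm ((hmem_map_iff t).mp hmem)
        rw [hNdef, Multiset.count_add, h1, h2]
        exact Nat.zero_le _
  -- card N = p.roots.card
  have hNcard : Multiset.card N = Multiset.card p.roots := by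
    rw [hNdef, Multiset.card_add, Multiset.card_map, Multiset.card_sub hSle]
    exact Nat.sub_add_cancel (Multiset.card_le_card hSle)
  -- N = q.roots
  have hNeq : N = q.roots :=
    Multiset.eq_of_le_of_card_le hNle (le_of_eq (hsame.trans hNcard.symm))
  have hqmult : ∀ t, q.rootMultiplicity t = N.count t := by
    intro t
    rw [← count_roots, hNeq]
  -- compute thetaMult p
  have hθp : thetaMult p =
      ∑ t ∈ S, (if 1 < p.rootMultiplicity t then p.rootMultiplicity t else 0) :=
    theta_sum p S (by rw [hSdef])
  -- compute thetaMult q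
  have hsub : q.roots.toFinset ⊆ S ∪ S.image η := by
    intro t ht
    rw [Multiset.mem_toFinset, ← hNeq, hNdef, Multiset.mem_add] at ht
    rcases ht with h | h
    · exact Finset.mem_union_left _
        (Multiset.mem_toFinset.mpr (Multiset.mem_of_le (tsub_le_self) h))
    · obtain ⟨ξ, hξ, rfl⟩ := (hmem_map_iff t).mp h
      exact Finset.mem_union_right _ (Finset.mem_image.mpr ⟨ξ, hξ, rfl⟩)
  have hθq : thetaMult q =
      ∑ t ∈ S, (if 1 < p.rootMultiplicity t - 1 then p.rootMultiplicity t - 1 else 0) := by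
    rw [theta_sum q _ hsub]
    have hdisj : Disjoint S (S.image η) := by
      rw [Finset.disjoint_right]
      intro t ht htS
      obtain ⟨ξ, hξ, rfl⟩ := Finset.mem_image.mp ht
      exact hηS ξ hξ htS
    rw [Finset.sum_union hdisj]
    have h2 : ∑ t ∈ S.image η,
        (if 1 < q.rootMultiplicity t then q.rootMultiplicity t else 0) = 0 := by
      apply Finset.sum_eq_zero
      intro t ht
      obtain ⟨ξ, hξ, rfl⟩ := Finset.mem_image.mp ht
      rw [hqmult, hNcount_map ξ hξ]
      simp
    rw [h2, add_zero]
    apply Finset.sum_congr rfl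
    intro t ht
    rw [hqmult, hNcount_S t ht]
  -- witness of a multiple root
  have hwit : ∃ t ∈ S, 1 < p.rootMultiplicity t := by
    have h := hθ
    unfold thetaMult at h
    rw [Multiset.card_pos] at h
    obtain ⟨t, ht⟩ := Multiset.exists_mem_of_ne_zero h
    have ht' := Multiset.mem_filter.mp ht
    exact ⟨t, Multiset.mem_toFinset.mpr ht'.1, ht'.2⟩
  rw [hθq, hθp]
  obtain ⟨t0, ht0S, ht0⟩ := hwit
  apply Finset.sum_lt_sum
  · intro t _
    split_ifs <;> omega
  · refine ⟨t0, ht0S, ?_⟩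
    split_ifs <;> omega
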